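/- Let d₁, d₂ be positive integers and let A₁,…,Aₘ be Hermitian d₁×d₁ matrices with {Aᵢ,Aⱼ} = 2δᵢⱼ·I, and B₁,…,Bₘ Hermitian d₂×d₂ matrices with {Bᵢ,Bⱼ} = 2δᵢⱼ·I. Then for any density matrices ρ (on ℂ^{d₁}) and σ (on ℂ^{d₂}), ∑ᵢ |Tr(Aᵢρ)·Tr(Bᵢσ)| ≤ 1. -/

import Mathlib

open ComplexOrder


lemma trace_psd_nonneg {n : ℕ} {X : Matrix (Fin n) (Fin n) ℂ} (hX : X.PosSemidef) :
    0 ≤ X.trace := by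
  exact hX.trace_nonneg

lemma trace_mul_real {n : ℕ} {X ρ : Matrix (Fin n) (Fin n) ℂ}
    (hX : X.IsHermitian) (hρ : ρ.IsHermitian) : ((X * ρ).trace).im = 0 := by
  have h : (starRingEnd ℂ) ((X * ρ).trace) = (X * ρ).trace := by
    have := Matrix.trace_conjTranspose (X * ρ)
    rw [Matrix.conjTranspose_mul, hX.eq, hρ.eq, Matrix.trace_mul_comm] at this
    exact this.symm
  exact Complex.conj_eq_iff_im.mp h

open scoped MatrixOrder in
lemma key_sq_bound {d m : ℕ} (A : Fin m → Matrix (Fin d) (Fin d) ℂ)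
    (hA : ∀ i, (A i).IsHermitian)
    (hAanti : ∀ i j, A i * A j + A j * A i =
      if i = j then (2 : ℂ) • (1 : Matrix (Fin d) (Fin d) ℂ) else 0)
    (ρ : Matrix (Fin d) (Fin d) ℂ) (hρ : ρ.PosSemidef) (hρ1 : ρ.trace = 1) :
    ∑ i, (((A i * ρ).trace).re) ^ 2 ≤ 1 := by
  set α : Fin m → ℝ := fun i => ((A i * ρ).trace).re with hα
  have him : ∀ i, ((A i * ρ).trace).im = 0 := fun i => trace_mul_real (hA i) hρ.1
  have htr : ∀ i, (A i * ρ).trace = ((α i : ℂ)) := by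
    intro i
    exact Complex.ext (by simp [hα]) (by simp [him i])
  by_cases h0 : ∑ i, α i ^ 2 = 0
  · rw [h0]; norm_num
  · set t : ℝ := Real.sqrt (∑ i, α i ^ 2) with ht
    have hsum_nonneg : 0 ≤ ∑ i, α i ^ 2 := Finset.sum_nonneg fun i _ => sq_nonneg _
    have ht_pos : 0 < t := Real.sqrt_pos.mpr (lt_of_le_of_ne hsum_nonneg (Ne.symm h0))
    have ht2 : t ^ 2 = ∑ i, α i ^ 2 := Real.sq_sqrt hsum_nonneg
    set s : Fin m → ℝ := fun i => α i / t with hs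
    have hs2 : ∑ i, s i ^ 2 = 1 := by
      simp only [hs, div_pow]
      rw [← Finset.sum_div, ← ht2]
      field_simp
    set C : Matrix (Fin d) (Fin d) ℂ := ∑ i, (s i : ℂ) • A i with hC
    have hCherm : C.IsHermitian := by
      unfold Matrix.IsHermitian
      rw [hC, Matrix.conjTranspose_sum]
      refine Finset.sum_congr rfl fun i _ => ?_
      rw [Matrix.conjTranspose_smul, (hA i).eq]
      simp [Complex.conj_ofReal]
    -- C² = 1
    have hCsq : C * C = 1 := by
      have expand : C * C = ∑ i, ∑ j, ((s i : ℂ) * (s j : ℂ)) • (A i * A j) := by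
        rw [hC, Finset.sum_mul]
        refine Finset.sum_congr rfl fun i _ => ?_
        rw [Finset.mul_sum]
        refine Finset.sum_congr rfl fun j _ => ?_
        rw [Matrix.smul_mul, Matrix.mul_smul, smul_smul]
      have expand' : C * C = ∑ i, ∑ j, ((s i : ℂ) * (s j : ℂ)) • (A j * A i) := by
        rw [expand, Finset.sum_comm]
        refine Finset.sum_congr rfl fun i _ => Finset.sum_congr rfl fun j _ => ?_
        rw [mul_comm ((s j : ℂ))]
      have h2 : (2 : ℂ) • (C * C) = ∑ i, ∑ j, ((s i : ℂ) * (s j : ℂ)) •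
          (A i * A j + A j * A i) := by
        rw [two_smul]
        nth_rewrite 1 [expand]
        nth_rewrite 1 [expand']
        rw [← Finset.sum_add_distrib]
        refine Finset.sum_congr rfl fun i _ => ?_
        rw [← Finset.sum_add_distrib]
        refine Finset.sum_congr rfl fun j _ => ?_
        rw [smul_add]
      rw [Finset.sum_congr rfl (fun i _ => Finset.sum_congr rfl
        (fun j _ => by rw [hAanti i j]))] at h2
      have h3 : (2 : ℂ) • (C * C) = (2 : ℂ) • (1 : Matrix (Fin d) (Fin d) ℂ) := by
        rw [h2]
        have hrow : ∀ i : Fin m, ∑ j, ((s i : ℂ) * (s j : ℂ)) •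
            (if i = j then (2 : ℂ) • (1 : Matrix (Fin d) (Fin d) ℂ) else 0)
            = ((s i : ℂ) ^ 2 * 2) • (1 : Matrix (Fin d) (Fin d) ℂ) := by
          intro i
          rw [Finset.sum_eq_single i]
          · simp [smul_smul, pow_two, mul_assoc]
          · intro j _ hji; simp [Ne.symm hji]
          · simp
        rw [Finset.sum_congr rfl (fun i _ => hrow i), ← Finset.sum_smul]
        congr 1
        rw [← Finset.sum_mul]
        have hcast : (∑ i, (s i : ℂ) ^ 2) = ((∑ i, s i ^ 2 : ℝ) : ℂ) := by norm_cast
        rw [hcast, hs2]; norm_num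
      have h2ne : (2 : ℂ) ≠ 0 := by norm_num
      exact smul_right_injective _ h2ne h3
    -- 1 - C is PSD
    have hpsd : (1 - C).PosSemidef := by
      have hMherm : ((((Real.sqrt 2)⁻¹ : ℝ) : ℂ) • (1 - C)).IsHermitian := by
        unfold Matrix.IsHermitian
        rw [Matrix.conjTranspose_smul, Matrix.conjTranspose_sub, hCherm.eq]
        simp [Complex.conj_ofReal]
      have h1 := Matrix.posSemidef_conjTranspose_mul_self
        ((((Real.sqrt 2)⁻¹ : ℝ) : ℂ) • (1 - C))
      rw [hMherm.eq] at h1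
      have key : ((((Real.sqrt 2)⁻¹ : ℝ) : ℂ) • (1 - C)) *
          ((((Real.sqrt 2)⁻¹ : ℝ) : ℂ) • (1 - C)) = 1 - C := by
        rw [Matrix.smul_mul, Matrix.mul_smul, smul_smul]
        have hsq : (1 - C) * (1 - C) = (2 : ℂ) • (1 - C) := by
          rw [sub_mul, mul_sub, mul_sub, hCsq, one_mul, mul_one, one_mul, two_smul]
          abel
        rw [hsq, smul_smul]
        have hval : ((((Real.sqrt 2)⁻¹ : ℝ) : ℂ) * (((Real.sqrt 2)⁻¹ : ℝ) : ℂ)) * 2 = 1 := by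
          rw [← Complex.ofReal_mul, ← Real.sqrt_inv, Real.mul_self_sqrt (by norm_num)]
          norm_num
        rw [hval, one_smul]
      rwa [key] at h1
    -- trace((1-C)ρ) = 1 - t  and  ≥ 0
    have htrC : ((1 - C) * ρ).trace = 1 - ((t : ℝ) : ℂ) := by
      rw [Matrix.sub_mul, Matrix.trace_sub, Matrix.one_mul, hρ1]
      congr 1
      rw [hC, Finset.sum_mul, Matrix.trace_sum]
      have hterm : ∀ i : Fin m, ((s i : ℂ) • A i * ρ).trace = ((s i : ℂ)) * ((α i : ℂ)) := by
        intro i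
        rw [Matrix.smul_mul, Matrix.trace_smul, htr i, smul_eq_mul]
      rw [Finset.sum_congr rfl (fun i _ => hterm i)]
      have hcast : ∑ i, ((s i : ℂ)) * ((α i : ℂ)) = ((∑ i, s i * α i : ℝ) : ℂ) := by
        norm_cast
      rw [hcast]
      congr 1
      have hsa : ∑ i, s i * α i = (∑ i, α i ^ 2) / t := by
        rw [Finset.sum_div]
        refine Finset.sum_congr rfl fun i _ => ?_
        simp only [hs]
        ring
      rw [hsa, ← ht2, pow_two, mul_div_assoc, div_self ht_pos.ne', mul_one]
    have hge : 0 ≤ ((1 - C) * ρ).trace := by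
      have hfac : ((1 - C) * ρ).trace = (CFC.sqrt ρ * (1 - C) * CFC.sqrt ρ).trace := by
        conv_lhs => rw [← CFC.sqrt_mul_sqrt_self ρ hρ.nonneg]
        rw [← Matrix.mul_assoc, Matrix.trace_mul_cycle]
      rw [hfac]
      apply trace_psd_nonneg
      have := hpsd.mul_mul_conjTranspose_same (CFC.sqrt ρ)
      rwa [(Matrix.nonneg_iff_posSemidef.mp (CFC.sqrt_nonneg ρ)).1.eq] at this
    have htle : t ≤ 1 := by
      rw [htrC] at hge
      have hre := (Complex.le_def.mp hge).1
      simpa using hre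
    calc ∑ i, α i ^ 2 = t ^ 2 := ht2.symm
      _ ≤ 1 := by nlinarith


/-- **Proposition 2 (anticommuting product bound).** If `A₁,…,Aₘ` are Hermitian `d₁ × d₁`
matrices with `{Aᵢ, Aⱼ} = 2δᵢⱼ 1`, and `B₁,…,Bₘ` Hermitian `d₂ × d₂` matrices with
`{Bᵢ, Bⱼ} = 2δᵢⱼ 1`, then for any density matrices `ρ`, `σ` we have
`∑ᵢ |Tr(Aᵢ ρ)| · |Tr(Bᵢ σ)| ≤ 1`. -/
theorem stmt0 {d₁ d₂ m : ℕ} (hd₁ : 0 < d₁) (hd₂ : 0 < d₂)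
    (A : Fin m → Matrix (Fin d₁) (Fin d₁) ℂ)
    (B : Fin m → Matrix (Fin d₂) (Fin d₂) ℂ)
    (hA : ∀ i, (A i).IsHermitian) (hB : ∀ i, (B i).IsHermitian)
    (hAanti : ∀ i j, A i * A j + A j * A i =
      if i = j then (2 : ℂ) • (1 : Matrix (Fin d₁) (Fin d₁) ℂ) else 0)
    (hBanti : ∀ i j, B i * B j + B j * B i =
      if i = j then (2 : ℂ) • (1 : Matrix (Fin d₂) (Fin d₂) ℂ) else 0)
    (ρ : Matrix (Fin d₁) (Fin d₁) ℂ) (σ : Matrix (Fin d₂) (Fin d₂) ℂ)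
    (hρ : ρ.PosSemidef) (hρ1 : ρ.trace = 1)
    (hσ : σ.PosSemidef) (hσ1 : σ.trace = 1) :
    ∑ i, ‖(A i * ρ).trace‖ * ‖(B i * σ).trace‖ ≤ 1 := by
  set α : Fin m → ℝ := fun i => ((A i * ρ).trace).re with hα
  set β : Fin m → ℝ := fun i => ((B i * σ).trace).re with hβ
  have habsA : ∀ i, ‖(A i * ρ).trace‖ = |α i| := by
    intro i
    have h : (A i * ρ).trace = ((α i : ℝ) : ℂ) :=
      Complex.ext (by simp [hα]) (by simp [trace_mul_real (hA i) hρ.1])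
    rw [h, Complex.norm_real, Real.norm_eq_abs]
  have habsB : ∀ i, ‖(B i * σ).trace‖ = |β i| := by
    intro i
    have h : (B i * σ).trace = ((β i : ℝ) : ℂ) :=
      Complex.ext (by simp [hβ]) (by simp [trace_mul_real (hB i) hσ.1])
    rw [h, Complex.norm_real, Real.norm_eq_abs]
  have hαb : ∑ i, α i ^ 2 ≤ 1 := key_sq_bound A hA hAanti ρ hρ hρ1
  have hβb : ∑ i, β i ^ 2 ≤ 1 := key_sq_bound B hB hBanti σ hσ hσ1
  have hCS := Finset.sum_mul_sq_le_sq_mul_sq Finset.univ (fun i => |α i|) (fun i => |β i|)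
  simp only [sq_abs] at hCS
  have hnn : 0 ≤ ∑ i, |α i| * |β i| :=
    Finset.sum_nonneg fun i _ => mul_nonneg (abs_nonneg _) (abs_nonneg _)
  have hrw : ∑ i, ‖(A i * ρ).trace‖ * ‖(B i * σ).trace‖
      = ∑ i, |α i| * |β i| :=
    Finset.sum_congr rfl fun i _ => by rw [habsA i, habsB i]
  rw [hrw]
  nlinarith [Finset.sum_nonneg (fun i (_ : i ∈ Finset.univ) => sq_nonneg (α i)),
    Finset.sum_nonneg (fun i (_ : i ∈ Finset.univ) => sq_nonneg (β i))]
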